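/- The map Ĵ ↦ π_k^⊥(Âᵀ Ĵ) is a linear isomorphism from ℝ^{n−1} onto the hyperplane k^⊥ = {y ∈ ℝⁿ : y·k = 0}. -/

import Mathlib

open scoped Matrix

/-- Euclidean dot product on `Fin n → ℝ`. -/
def edot {n : ℕ} (x y : Fin n → ℝ) : ℝ := ∑ i, x i * y i

/-- Orthogonal projection onto the hyperplane orthogonal to `k`:
`π_k^⊥ y = y − κ⁻¹ (y·k) k` with `κ = ‖k‖²`. -/
noncomputable def eproj {n : ℕ} (k y : Fin n → ℝ) : Fin n → ℝ :=
  y - ((∑ i, k i ^ 2)⁻¹ * edot y k) • k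

theorem stmt_2 (m : ℕ) (hm : 1 ≤ m) (k : Fin (m + 1) → ℝ) (hk : k ≠ 0)
    (Ahat : Matrix (Fin m) (Fin (m + 1)) ℝ)
    (hdet : (Matrix.of fun (i j : Fin (m + 1)) =>
        if h : (i : ℕ) < m then Ahat ⟨i, h⟩ j else k j).det = 1) :
    Function.Injective (fun Jhat : Fin m → ℝ => eproj k (Ahatᵀ.mulVec Jhat)) ∧
      Set.range (fun Jhat : Fin m → ℝ => eproj k (Ahatᵀ.mulVec Jhat)) =
        {y : Fin (m + 1) → ℝ | edot y k = 0} := by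
  classical
  set κ : ℝ := ∑ i, k i ^ 2 with hκdef
  have hκ : κ ≠ 0 := by
    obtain ⟨i, hi⟩ := Function.ne_iff.mp hk
    have hpos : 0 < κ := Finset.sum_pos' (fun j _ => sq_nonneg _)
      ⟨i, Finset.mem_univ i, pow_two_pos_of_ne_zero hi⟩
    exact ne_of_gt hpos
  have hedot : ∀ (x : Fin (m+1) → ℝ) (c : ℝ), edot (x + c • k) k = edot x k + c * κ := by
    intro x c
    simp only [edot, hκdef, Pi.add_apply, Pi.smul_apply, smul_eq_mul, add_mul,
      Finset.sum_add_distrib, Finset.mul_sum, sq]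
    ring_nf
  have heproj_add : ∀ (x : Fin (m+1) → ℝ) (c : ℝ), eproj k (x + c • k) = eproj k x := by
    intro x c
    funext i
    simp only [eproj, hedot, Pi.sub_apply, Pi.add_apply, Pi.smul_apply, smul_eq_mul, ← hκdef]
    field_simp
    ring
  have heproj_fix : ∀ y : Fin (m+1) → ℝ, edot y k = 0 → eproj k y = y := by
    intro y hy
    funext i
    simp [eproj, hy]
  have heproj_orth : ∀ y : Fin (m+1) → ℝ, edot (eproj k y) k = 0 := by
    intro y
    have : eproj k y = y + (-(κ⁻¹ * edot y k)) • k := by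
      funext i; simp [eproj, ← hκdef, sub_eq_add_neg]
    rw [this, hedot]
    field_simp
    ring
  set A : Matrix (Fin (m+1)) (Fin (m+1)) ℝ := Matrix.of fun (i j : Fin (m + 1)) =>
    if h : (i : ℕ) < m then Ahat ⟨i, h⟩ j else k j with hAdef
  have hdetT : Aᵀ.det = 1 := by rw [Matrix.det_transpose]; exact hdet
  have hunitT : IsUnit Aᵀ.det := by rw [hdetT]; exact isUnit_one
  have hinj : Function.Injective (Aᵀ.mulVec) := by
    intro v v' hvv
    have := congrArg ((Aᵀ)⁻¹.mulVec) hvv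
    rwa [Matrix.mulVec_mulVec, Matrix.mulVec_mulVec, Matrix.nonsing_inv_mul _ hunitT,
      Matrix.one_mulVec, Matrix.one_mulVec] at this
  have hsurj : Function.Surjective (Aᵀ.mulVec) := by
    intro y
    refine ⟨(Aᵀ)⁻¹.mulVec y, ?_⟩
    rw [Matrix.mulVec_mulVec, Matrix.mul_nonsing_inv _ hunitT, Matrix.one_mulVec]
  -- key: Aᵀ.mulVec of extended vector
  have hW : ∀ (J : Fin m → ℝ) (c : ℝ),
      Aᵀ.mulVec (fun i => if h : (i : ℕ) < m then J ⟨i, h⟩ else c)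
        = Ahatᵀ.mulVec J + c • k := by
    intro J c
    funext j
    simp only [Matrix.mulVec, dotProduct, Matrix.transpose_apply, hAdef,
      Matrix.of_apply, Pi.add_apply, Pi.smul_apply, smul_eq_mul]
    rw [Fin.sum_univ_castSucc]
    have h1 : ∀ i : Fin m, ((Fin.castSucc i : Fin (m+1)) : ℕ) < m := fun i => i.isLt
    have h2 : ¬ ((Fin.last m : ℕ) < m) := by simp
    rw [dif_neg h2, dif_neg h2]
    congr 1
    · refine Finset.sum_congr rfl fun i _ => ?_
      rw [dif_pos (h1 i), dif_pos (h1 i)]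
      congr 1
    · exact mul_comm _ _
  constructor
  · intro J J' hJJ
    simp only at hJJ
    set c : ℝ := κ⁻¹ * edot (Ahatᵀ.mulVec J) k with hc
    set c' : ℝ := κ⁻¹ * edot (Ahatᵀ.mulVec J') k with hc'
    have hkey : Aᵀ.mulVec (fun i => if h : (i : ℕ) < m then J ⟨i, h⟩ else -c)
        = Aᵀ.mulVec (fun i => if h : (i : ℕ) < m then J' ⟨i, h⟩ else -c') := by
      rw [hW, hW]
      have e1 : Ahatᵀ.mulVec J + (-c) • k = eproj k (Ahatᵀ.mulVec J) := by
        funext i; simp [eproj, ← hκdef, hc, sub_eq_add_neg]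
      have e2 : Ahatᵀ.mulVec J' + (-c') • k = eproj k (Ahatᵀ.mulVec J') := by
        funext i; simp [eproj, ← hκdef, hc', sub_eq_add_neg]
      rw [e1, e2, hJJ]
    have := hinj hkey
    funext i
    have hi := congrFun this (Fin.castSucc i)
    have h1 : ((Fin.castSucc i : Fin (m+1)) : ℕ) < m := i.isLt
    rw [dif_pos h1, dif_pos h1] at hi
    simpa using hi
  · ext y
    constructor
    · rintro ⟨J, rfl⟩
      exact heproj_orth _
    · intro hy
      obtain ⟨w, hw⟩ := hsurj y
      set J : Fin m → ℝ := fun i => w (Fin.castSucc i) with hJ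
      set c : ℝ := w (Fin.last m) with hcd
      have hwW : w = fun i : Fin (m+1) => if h : (i : ℕ) < m then J ⟨i, h⟩ else c := by
        funext i
        by_cases h : (i : ℕ) < m
        · rw [dif_pos h]
          rfl
        · rw [dif_neg h]
          have : i = Fin.last m := Fin.ext (by simp only [Fin.val_last]; omega)
          rw [this]
      have hy2 : y = Ahatᵀ.mulVec J + c • k := by
        rw [← hw, hwW, hW]
      refine ⟨J, ?_⟩
      simp only
      have : Ahatᵀ.mulVec J = y + (-c) • k := by
        rw [hy2]; funext i; simp only [Pi.add_apply, Pi.smul_apply, smul_eq_mul, neg_mul]; ring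
      rw [this, heproj_add, heproj_fix y hy]
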